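/- arXiv:2504.01215 — 2 statements merged into one kernel-verified Lean document; each statement's English description precedes it below -/
import Mathlib

section
/- For every r ∈ (0,1) and every β ∈ ℝ, with q = √(1−r²), the product R_L(π)·R_R(π+β)·R_L(π+β)·R_R(π) equals the 3×3 matrix with entries: (1,1) = 1 − 20r² + 75r⁴ − 104r⁶ + 48r⁸ + 4r²(16r⁶−32r⁴+19r²−3)cos β + r⁴(3−4r²)² cos 2β; (1,2) = −2r(1−5r²+4r⁴ + r²(4r²−3)cos β) sin β; (1,3) = r·q·(−6+41r²−80r⁴+48r⁶ + (−2+36r²−96r⁴+64r⁶)cos β + r²(3−16r²+16r⁴)cos 2β); (2,1) = −(1,2) entry; (2,2) = 1 − r² + r² cos 2β; (2,3) = 2r²·q·(4r²−3+(4r²−1)cos β) sin β; (3,1) = −(1,3) entry; (3,2) = (2,3) entry; (3,3) = 1 − 19r² + 75r⁴ − 104r⁶ + 48r⁸ + 4r²(−3+19r²−32r⁴+16r⁶)cos β + r²(1−4r²)²(r²−1)cos 2β. -/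
open Real

noncomputable def OmegaL (r : ℝ) : Matrix (Fin 3) (Fin 3) ℝ :=
  !![0, -r, 0; r, 0, -Real.sqrt (1 - r ^ 2); 0, Real.sqrt (1 - r ^ 2), 0]

noncomputable def OmegaR (r : ℝ) : Matrix (Fin 3) (Fin 3) ℝ :=
  !![0, -r, 0; r, 0, Real.sqrt (1 - r ^ 2); 0, -Real.sqrt (1 - r ^ 2), 0]

noncomputable def OmegaG : Matrix (Fin 3) (Fin 3) ℝ :=
  !![0, -1, 0; 1, 0, 0; 0, 0, 0]

/-- Rotation matrix of a left turn of radius `r` and arc angle `φ`. -/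
noncomputable def RL (r φ : ℝ) : Matrix (Fin 3) (Fin 3) ℝ := NormedSpace.exp (φ • OmegaL r)

/-- Rotation matrix of a right turn of radius `r` and arc angle `φ`. -/
noncomputable def RR (r φ : ℝ) : Matrix (Fin 3) (Fin 3) ℝ := NormedSpace.exp (φ • OmegaR r)

/-- Rotation matrix of a great-circle arc of angle `φ`. -/
noncomputable def RG (φ : ℝ) : Matrix (Fin 3) (Fin 3) ℝ := NormedSpace.exp (φ • OmegaG)


lemma exp_cube (Ω : Matrix (Fin 3) (Fin 3) ℝ) (h3 : Ω * Ω * Ω = -Ω) (φ : ℝ) :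
    NormedSpace.exp (φ • Ω) = 1 + Real.sin φ • Ω + (1 - Real.cos φ) • (Ω * Ω) := by
  letI : SeminormedRing (Matrix (Fin 3) (Fin 3) ℝ) := Matrix.linftyOpSemiNormedRing
  letI : NormedRing (Matrix (Fin 3) (Fin 3) ℝ) := Matrix.linftyOpNormedRing
  letI : NormedAlgebra ℝ (Matrix (Fin 3) (Fin 3) ℝ) := Matrix.linftyOpNormedAlgebra
  set g : ℝ → Matrix (Fin 3) (Fin 3) ℝ := fun t =>
    NormedSpace.exp (t • (-Ω)) * (1 + Real.sin t • Ω + (1 - Real.cos t) • (Ω * Ω)) with hg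
  have hderiv : ∀ t : ℝ, HasDerivAt g 0 t := by
    intro t
    have h1 : HasDerivAt (fun u : ℝ => NormedSpace.exp (u • (-Ω)))
        (NormedSpace.exp (t • (-Ω)) * (-Ω)) t := hasDerivAt_exp_smul_const (-Ω) t
    have hsin : HasDerivAt (fun u : ℝ => Real.sin u • Ω) (Real.cos t • Ω) t :=
      (Real.hasDerivAt_sin t).smul_const Ω
    have hcos : HasDerivAt (fun u : ℝ => (1 - Real.cos u) • (Ω * Ω))
        (Real.sin t • (Ω * Ω)) t := by
      have := ((Real.hasDerivAt_cos t).const_sub 1).smul_const (Ω * Ω)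
      simp at this; exact this
    have h2 : HasDerivAt (fun u : ℝ => (1 : Matrix (Fin 3) (Fin 3) ℝ) + Real.sin u • Ω +
        (1 - Real.cos u) • (Ω * Ω)) (Real.cos t • Ω + Real.sin t • (Ω * Ω)) t := by
      have := ((hasDerivAt_const t (1 : Matrix (Fin 3) (Fin 3) ℝ)).add hsin).add hcos
      simp at this; exact this
    have key := h1.mul h2
    have hzero : NormedSpace.exp (t • (-Ω)) * (-Ω) *
        (1 + Real.sin t • Ω + (1 - Real.cos t) • (Ω * Ω)) +
        NormedSpace.exp (t • (-Ω)) * (Real.cos t • Ω + Real.sin t • (Ω * Ω)) = 0 := by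
      have h3' : Ω * (Ω * Ω) = -Ω := by rw [← mul_assoc, h3]
      have inner : (-Ω) * (1 + Real.sin t • Ω + (1 - Real.cos t) • (Ω * Ω)) +
          (Real.cos t • Ω + Real.sin t • (Ω * Ω)) = 0 := by
        rw [sub_smul, one_smul]
        simp only [neg_mul, mul_add, mul_sub, mul_one, mul_smul_comm, h3', smul_neg, mul_neg,
          smul_sub]
        abel
      have hmul := congrArg (fun M => NormedSpace.exp (t • (-Ω)) * M) inner
      simpa only [mul_add, mul_zero, mul_assoc] using hmul
    rw [hzero] at key
    exact key
  have hconst : g φ = g 0 := by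
    have hdiff : Differentiable ℝ g := fun t => (hderiv t).differentiableAt
    have : ∀ t, deriv g t = 0 := fun t => (hderiv t).deriv
    exact is_const_of_deriv_eq_zero hdiff this φ 0
  have hg0 : g 0 = 1 := by
    simp [hg, NormedSpace.exp_zero]
  have hinv : NormedSpace.exp (φ • Ω) * NormedSpace.exp (φ • (-Ω)) = 1 := by
    rw [← Matrix.exp_add_of_commute]
    · simp
    · simp [Commute, SemiconjBy, smul_neg, mul_neg, neg_mul]
  calc NormedSpace.exp (φ • Ω)
      = NormedSpace.exp (φ • Ω) * g φ := by rw [hconst, hg0, mul_one]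
    _ = NormedSpace.exp (φ • Ω) * NormedSpace.exp (φ • (-Ω)) *
        (1 + Real.sin φ • Ω + (1 - Real.cos φ) • (Ω * Ω)) := by rw [hg, mul_assoc]
    _ = 1 + Real.sin φ • Ω + (1 - Real.cos φ) • (Ω * Ω) := by rw [hinv, one_mul]


lemma rodL (r a b : ℝ) :
    (1 : Matrix (Fin 3) (Fin 3) ℝ) + a • OmegaL r + b • (OmegaL r * OmegaL r) =
    !![1 - b * r ^ 2, -(a * r), b * (r * Real.sqrt (1 - r ^ 2));
       a * r, 1 - b * (r ^ 2 + Real.sqrt (1 - r ^ 2) ^ 2), -(a * Real.sqrt (1 - r ^ 2));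
       b * (Real.sqrt (1 - r ^ 2) * r), a * Real.sqrt (1 - r ^ 2),
         1 - b * Real.sqrt (1 - r ^ 2) ^ 2] := by
  ext i j
  fin_cases i <;> fin_cases j <;>
    simp [OmegaL, Matrix.mul_apply, Fin.sum_univ_three, Matrix.one_apply] <;> ring1

lemma rodR (r a b : ℝ) :
    (1 : Matrix (Fin 3) (Fin 3) ℝ) + a • OmegaR r + b • (OmegaR r * OmegaR r) =
    !![1 - b * r ^ 2, -(a * r), -(b * (r * Real.sqrt (1 - r ^ 2)));
       a * r, 1 - b * (r ^ 2 + Real.sqrt (1 - r ^ 2) ^ 2), a * Real.sqrt (1 - r ^ 2);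
       -(b * (Real.sqrt (1 - r ^ 2) * r)), -(a * Real.sqrt (1 - r ^ 2)),
         1 - b * Real.sqrt (1 - r ^ 2) ^ 2] := by
  ext i j
  fin_cases i <;> fin_cases j <;>
    simp [OmegaR, Matrix.mul_apply, Fin.sum_univ_three, Matrix.one_apply] <;> ring1

lemma cubeL {r : ℝ} (hq : Real.sqrt (1 - r ^ 2) ^ 2 = 1 - r ^ 2) :
    OmegaL r * OmegaL r * OmegaL r = -OmegaL r := by
  ext i j
  fin_cases i <;> fin_cases j <;>
    simp [OmegaL, Matrix.mul_apply, Fin.sum_univ_three] <;>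
    first
      | ring1
      | linear_combination r * hq
      | linear_combination (-r) * hq
      | linear_combination Real.sqrt (1 - r ^ 2) * hq
      | linear_combination (-Real.sqrt (1 - r ^ 2)) * hq

lemma cubeR {r : ℝ} (hq : Real.sqrt (1 - r ^ 2) ^ 2 = 1 - r ^ 2) :
    OmegaR r * OmegaR r * OmegaR r = -OmegaR r := by
  ext i j
  fin_cases i <;> fin_cases j <;>
    simp [OmegaR, Matrix.mul_apply, Fin.sum_univ_three] <;>
    first
      | ring1
      | linear_combination r * hq
      | linear_combination (-r) * hq
      | linear_combination Real.sqrt (1 - r ^ 2) * hq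
      | linear_combination (-Real.sqrt (1 - r ^ 2)) * hq

theorem stmt_14 (r β : ℝ) (hr : r ∈ Set.Ioo (0 : ℝ) 1) :
    RL r Real.pi * RR r (Real.pi + β) * RL r (Real.pi + β) * RR r Real.pi =
      !![1 - 20 * r ^ 2 + 75 * r ^ 4 - 104 * r ^ 6 + 48 * r ^ 8 +
           4 * r ^ 2 * (16 * r ^ 6 - 32 * r ^ 4 + 19 * r ^ 2 - 3) * Real.cos β +
           r ^ 4 * (3 - 4 * r ^ 2) ^ 2 * Real.cos (2 * β),
         -(2 * r * (1 - 5 * r ^ 2 + 4 * r ^ 4 + r ^ 2 * (4 * r ^ 2 - 3) * Real.cos β) *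
           Real.sin β),
         r * Real.sqrt (1 - r ^ 2) *
           (-6 + 41 * r ^ 2 - 80 * r ^ 4 + 48 * r ^ 6 +
             (-2 + 36 * r ^ 2 - 96 * r ^ 4 + 64 * r ^ 6) * Real.cos β +
             r ^ 2 * (3 - 16 * r ^ 2 + 16 * r ^ 4) * Real.cos (2 * β));
         2 * r * (1 - 5 * r ^ 2 + 4 * r ^ 4 + r ^ 2 * (4 * r ^ 2 - 3) * Real.cos β) *
           Real.sin β,
         1 - r ^ 2 + r ^ 2 * Real.cos (2 * β),
         2 * r ^ 2 * Real.sqrt (1 - r ^ 2) * (4 * r ^ 2 - 3 + (4 * r ^ 2 - 1) * Real.cos β) *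
           Real.sin β;
         -(r * Real.sqrt (1 - r ^ 2) *
           (-6 + 41 * r ^ 2 - 80 * r ^ 4 + 48 * r ^ 6 +
             (-2 + 36 * r ^ 2 - 96 * r ^ 4 + 64 * r ^ 6) * Real.cos β +
             r ^ 2 * (3 - 16 * r ^ 2 + 16 * r ^ 4) * Real.cos (2 * β))),
         2 * r ^ 2 * Real.sqrt (1 - r ^ 2) * (4 * r ^ 2 - 3 + (4 * r ^ 2 - 1) * Real.cos β) *
           Real.sin β,
         1 - 19 * r ^ 2 + 75 * r ^ 4 - 104 * r ^ 6 + 48 * r ^ 8 +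
           4 * r ^ 2 * (-3 + 19 * r ^ 2 - 32 * r ^ 4 + 16 * r ^ 6) * Real.cos β +
           r ^ 2 * (1 - 4 * r ^ 2) ^ 2 * (r ^ 2 - 1) * Real.cos (2 * β)] := by
  have h1r : (0:ℝ) ≤ 1 - r ^ 2 := by nlinarith [hr.1, hr.2]
  have hq : Real.sqrt (1 - r ^ 2) ^ 2 = 1 - r ^ 2 := Real.sq_sqrt h1r
  have hs : Real.sin β ^ 2 = 1 - Real.cos β ^ 2 := by
    nlinarith [Real.sin_sq_add_cos_sq β]
  rw [RL, RR, RL, RR, exp_cube _ (cubeL hq), exp_cube _ (cubeR hq),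
    exp_cube _ (cubeL hq), exp_cube _ (cubeR hq), rodL, rodR, rodL, rodR,
    Matrix.mul_fin_three, Matrix.mul_fin_three, Matrix.mul_fin_three]
  simp only [Real.sin_pi, Real.cos_pi, Real.sin_add, Real.cos_add, Real.cos_two_mul]
  ext i j
  fin_cases i <;> fin_cases j <;>
    simp only [Matrix.cons_val', Matrix.cons_val_zero, Matrix.cons_val_one, Matrix.head_cons,
      Matrix.empty_val', Matrix.cons_val_fin_one, Matrix.head_fin_const, Fin.isValue,
      Fin.zero_eta, Fin.mk_one, Matrix.of_apply, Matrix.cons_val_two, Matrix.tail_cons, Fin.reduceFinMk]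
  · linear_combination ((-5) * r ^ 2 + (-8) * r ^ 2 * Real.sin β ^ 2 + (-10) * r ^ 2 * Real.cos β + (-9) * r ^ 2 * Real.cos β ^ 2 + (-4) * r ^ 2 * Real.sqrt (1 - r ^ 2) ^ 2 * Real.sin β ^ 2 + (-8) * r ^ 2 * Real.sqrt (1 - r ^ 2) ^ 2 * Real.cos β + (-8) * r ^ 2 * Real.sqrt (1 - r ^ 2) ^ 2 * Real.cos β ^ 2 + (-4) * r ^ 2 * Real.sqrt (1 - r ^ 2) ^ 4 + (-8) * r ^ 2 * Real.sqrt (1 - r ^ 2) ^ 4 * Real.cos β + (-4) * r ^ 2 * Real.sqrt (1 - r ^ 2) ^ 4 * Real.cos β ^ 2 + (24) * r ^ 4 + (12) * r ^ 4 * Real.sin β ^ 2 + (56) * r ^ 4 * Real.cos β + (32) * r ^ 4 * Real.cos β ^ 2 + (16) * r ^ 4 * Real.sqrt (1 - r ^ 2) ^ 2 + (32) * r ^ 4 * Real.sqrt (1 - r ^ 2) ^ 2 * Real.cos β + (16) * r ^ 4 * Real.sqrt (1 - r ^ 2) ^ 2 * Real.cos β ^ 2 + (-28) * r ^ 6 +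 (-56) * r ^ 6 * Real.cos β + (-28) * r ^ 6 * Real.cos β ^ 2) * hq + ((-9) * r ^ 2 + (24) * r ^ 4 + (-16) * r ^ 6) * hs
  · linear_combination ((-4) * r * Real.sin β + (16) * r ^ 3 * Real.sin β + (8) * r ^ 3 * Real.cos β * Real.sin β + (8) * r ^ 3 * Real.sqrt (1 - r ^ 2) ^ 2 * Real.sin β + (8) * r ^ 3 * Real.sqrt (1 - r ^ 2) ^ 2 * Real.cos β * Real.sin β + (-8) * r ^ 5 * Real.sin β + (-8) * r ^ 5 * Real.cos β * Real.sin β) * hq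
  · linear_combination ((-3) * r * Real.sqrt (1 - r ^ 2) + (-4) * r * Real.sqrt (1 - r ^ 2) * Real.sin β ^ 2 + (-2) * r * Real.sqrt (1 - r ^ 2) * Real.cos β + (-3) * r * Real.sqrt (1 - r ^ 2) * Real.cos β ^ 2 + (4) * r * Real.sqrt (1 - r ^ 2) ^ 3 + (-4) * r * Real.sqrt (1 - r ^ 2) ^ 3 * Real.sin β ^ 2 + (-4) * r * Real.sqrt (1 - r ^ 2) ^ 3 * Real.cos β ^ 2 + (-4) * r * Real.sqrt (1 - r ^ 2) ^ 5 + (-8) * r * Real.sqrt (1 - r ^ 2) ^ 5 * Real.cos β + (-4) * r * Real.sqrt (1 - r ^ 2) ^ 5 * Real.cos β ^ 2 + (12) * r ^ 3 * Real.sqrt (1 - r ^ 2) + (12) * r ^ 3 * Real.sqrt (1 - r ^ 2) * Real.sin β ^ 2 + (32) * r ^ 3 * Real.sqrt (1 - r ^ 2) * Real.cos β + (20) * r ^ 3 * Real.sqrt (1 - r ^ 2) * Real.cos β ^ 2 + (16) * r ^ 3 * Real.sqrt (1 - r ^ 2) ^ 3 + (32) * r ^ 3 * Real.sqrt (1 -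 r ^ 2) ^ 3 * Real.cos β + (16) * r ^ 3 * Real.sqrt (1 - r ^ 2) ^ 3 * Real.cos β ^ 2 + (-28) * r ^ 5 * Real.sqrt (1 - r ^ 2) + (-56) * r ^ 5 * Real.sqrt (1 - r ^ 2) * Real.cos β + (-28) * r ^ 5 * Real.sqrt (1 - r ^ 2) * Real.cos β ^ 2) * hq + ((-3) * r * Real.sqrt (1 - r ^ 2) + (16) * r ^ 3 * Real.sqrt (1 - r ^ 2) + (-16) * r ^ 5 * Real.sqrt (1 - r ^ 2)) * hs
  · linear_combination ((4) * r * Real.sin β + (-16) * r ^ 3 * Real.sin β + (-8) * r ^ 3 * Real.cos β * Real.sin β + (-8) * r ^ 3 * Real.sqrt (1 - r ^ 2) ^ 2 * Real.sin β + (-8) * r ^ 3 * Real.sqrt (1 - r ^ 2) ^ 2 * Real.cos β * Real.sin β + (8) * r ^ 5 * Real.sin β + (8) * r ^ 5 * Real.cos β * Real.sin β) * hq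
  · linear_combination ((-1) + (1) * Real.sin β ^ 2 + (1) * Real.cos β ^ 2 + (5) * Real.sqrt (1 - r ^ 2) ^ 2 + (2) * Real.sqrt (1 - r ^ 2) ^ 2 * Real.cos β + (1) * Real.sqrt (1 - r ^ 2) ^ 2 * Real.cos β ^ 2 + (-8) * Real.sqrt (1 - r ^ 2) ^ 4 + (4) * Real.sqrt (1 - r ^ 2) ^ 4 * Real.sin β ^ 2 + (-8) * Real.sqrt (1 - r ^ 2) ^ 4 * Real.cos β + (4) * Real.sqrt (1 - r ^ 2) ^ 6 + (8) * Real.sqrt (1 - r ^ 2) ^ 6 * Real.cos β + (4) * Real.sqrt (1 - r ^ 2) ^ 6 * Real.cos β ^ 2 + (5) * r ^ 2 + (2) * r ^ 2 * Real.cos β + (1) * r ^ 2 * Real.cos β ^ 2 + (-16) * r ^ 2 * Real.sqrt (1 - r ^ 2) ^ 2 + (-16) * r ^ 2 * Real.sqrt (1 - r ^ 2) ^ 2 * Real.cos β + (12) * r ^ 2 * Real.sqrt (1 - r ^ 2) ^ 4 + (24) * r ^ 2 * Real.sqrt (1 - r ^ 2) ^ 4 * Real.cos β + (12) * r ^ 2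 * Real.sqrt (1 - r ^ 2) ^ 4 * Real.cos β ^ 2 + (-8) * r ^ 4 + (-4) * r ^ 4 * Real.sin β ^ 2 + (-8) * r ^ 4 * Real.cos β + (12) * r ^ 4 * Real.sqrt (1 - r ^ 2) ^ 2 + (24) * r ^ 4 * Real.sqrt (1 - r ^ 2) ^ 2 * Real.cos β + (12) * r ^ 4 * Real.sqrt (1 - r ^ 2) ^ 2 * Real.cos β ^ 2 + (4) * r ^ 6 + (8) * r ^ 6 * Real.cos β + (4) * r ^ 6 * Real.cos β ^ 2) * hq + ((1) + (-2) * r ^ 2) * hs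
  · linear_combination ((-8) * r ^ 2 * Real.sqrt (1 - r ^ 2) * Real.sin β + (-8) * r ^ 2 * Real.sqrt (1 - r ^ 2) ^ 3 * Real.sin β + (-8) * r ^ 2 * Real.sqrt (1 - r ^ 2) ^ 3 * Real.cos β * Real.sin β + (8) * r ^ 4 * Real.sqrt (1 - r ^ 2) * Real.sin β + (8) * r ^ 4 * Real.sqrt (1 - r ^ 2) * Real.cos β * Real.sin β) * hq
  · linear_combination ((3) * r * Real.sqrt (1 - r ^ 2) + (4) * r * Real.sqrt (1 - r ^ 2) * Real.sin β ^ 2 + (2) * r * Real.sqrt (1 - r ^ 2) * Real.cos β + (3) * r * Real.sqrt (1 - r ^ 2) * Real.cos β ^ 2 + (-4) * r * Real.sqrt (1 - r ^ 2) ^ 3 + (4) * r * Real.sqrt (1 - r ^ 2) ^ 3 * Real.sin β ^ 2 + (4) * r * Real.sqrt (1 - r ^ 2) ^ 3 * Real.cos β ^ 2 + (4) * r * Real.sqrt (1 - r ^ 2) ^ 5 + (8) * r * Real.sqrt (1 - r ^ 2) ^ 5 * Real.cos β + (4) * r * Real.sqrt (1 - r ^ 2) ^ 5 * Real.cos β ^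 2 + (-12) * r ^ 3 * Real.sqrt (1 - r ^ 2) + (-12) * r ^ 3 * Real.sqrt (1 - r ^ 2) * Real.sin β ^ 2 + (-32) * r ^ 3 * Real.sqrt (1 - r ^ 2) * Real.cos β + (-20) * r ^ 3 * Real.sqrt (1 - r ^ 2) * Real.cos β ^ 2 + (-16) * r ^ 3 * Real.sqrt (1 - r ^ 2) ^ 3 + (-32) * r ^ 3 * Real.sqrt (1 - r ^ 2) ^ 3 * Real.cos β + (-16) * r ^ 3 * Real.sqrt (1 - r ^ 2) ^ 3 * Real.cos β ^ 2 + (28) * r ^ 5 * Real.sqrt (1 - r ^ 2) + (56) * r ^ 5 * Real.sqrt (1 - r ^ 2) * Real.cos β + (28) * r ^ 5 * Real.sqrt (1 - r ^ 2) * Real.cos β ^ 2) * hq + ((3) * r * Real.sqrt (1 - r ^ 2) + (-16) * r ^ 3 * Real.sqrt (1 - r ^ 2) + (16) * r ^ 5 * Real.sqrt (1 - r ^ 2)) * hs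
  · linear_combination ((-8) * r ^ 2 * Real.sqrt (1 - r ^ 2) * Real.sin β + (-8) * r ^ 2 * Real.sqrt (1 - r ^ 2) ^ 3 * Real.sin β + (-8) * r ^ 2 * Real.sqrt (1 - r ^ 2) ^ 3 * Real.cos β * Real.sin β + (8) * r ^ 4 * Real.sqrt (1 - r ^ 2) * Real.sin β + (8) * r ^ 4 * Real.sqrt (1 - r ^ 2) * Real.cos β * Real.sin β) * hq
  · linear_combination ((-1) + (1) * Real.sin β ^ 2 + (1) * Real.cos β ^ 2 + (5) * Real.sqrt (1 - r ^ 2) ^ 2 + (2) * Real.sqrt (1 - r ^ 2) ^ 2 * Real.cos β + (1) * Real.sqrt (1 - r ^ 2) ^ 2 * Real.cos β ^ 2 + (-8) * Real.sqrt (1 - r ^ 2) ^ 4 + (4) * Real.sqrt (1 - r ^ 2) ^ 4 * Real.sin β ^ 2 + (-8) * Real.sqrt (1 - r ^ 2) ^ 4 * Real.cos β + (4) * Real.sqrt (1 - r ^ 2) ^ 6 + (8) * Real.sqrt (1 - r ^ 2) ^ 6 * Real.cos β + (4) * Real.sqrt (1 - r ^ 2) ^ 6 * Real.cos β ^ 2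 + (-10) * r ^ 2 + (-8) * r ^ 2 * Real.sin β ^ 2 + (-12) * r ^ 2 * Real.cos β + (-10) * r ^ 2 * Real.cos β ^ 2 + (-12) * r ^ 2 * Real.sqrt (1 - r ^ 2) ^ 2 * Real.sin β ^ 2 + (-8) * r ^ 2 * Real.sqrt (1 - r ^ 2) ^ 2 * Real.cos β + (-8) * r ^ 2 * Real.sqrt (1 - r ^ 2) ^ 2 * Real.cos β ^ 2 + (-16) * r ^ 2 * Real.sqrt (1 - r ^ 2) ^ 4 + (-32) * r ^ 2 * Real.sqrt (1 - r ^ 2) ^ 4 * Real.cos β + (-16) * r ^ 2 * Real.sqrt (1 - r ^ 2) ^ 4 * Real.cos β ^ 2 + (32) * r ^ 4 + (16) * r ^ 4 * Real.sin β ^ 2 + (64) * r ^ 4 * Real.cos β + (32) * r ^ 4 * Real.cos β ^ 2 + (28) * r ^ 4 * Real.sqrt (1 - r ^ 2) ^ 2 + (56) * r ^ 4 * Real.sqrt (1 - r ^ 2) ^ 2 * Real.cos β + (28) * r ^ 4 * Real.sqrt (1 - r ^ 2) ^ 2 * Real.cos β ^ 2 + (-32) * r ^ 6 + (-64) * r ^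 6 * Real.cos β + (-32) * r ^ 6 * Real.cos β ^ 2) * hq + ((1) + (-9) * r ^ 2 + (24) * r ^ 4 + (-16) * r ^ 6) * hs
end

section
/- Let 1/√2 < r ≤ √3/2 and β ∈ (0, π). Set g = 5 − 10r² + 6r⁴ + 4(2r²−1)(r²−1)cos β − 2r²(1−r²)cos 2β, C = 2(3r²−2)(r²−1) + 4(2r²−1)(r²−1)cos β + (2r⁴−2r²+1)cos 2β, D = 2 sin β·(2(r²−1) + (2r²−1)cos β), and let φ ∈ ℝ satisfy sin φ = −D/g and cos φ = −C/g. Then the (2,3) entry of the product R_L(φ)·R_R(π−β)·R_L(π−β)·R_R(φ) equals 2r²·√(1−r²)·(4r²−3+(4r²−1)cos β) sin β, which is the (2,3) entry of R_L(π)·R_R(π+β)·R_L(π+β)·R_R(π). -/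
open Real

lemma rodrigues (A : Matrix (Fin 3) (Fin 3) ℝ) (hA : A ^ 3 = -A) (t : ℝ) :
    NormedSpace.exp (t • A) = 1 + Real.sin t • A + (1 - Real.cos t) • (A ^ 2) := by
  letI : SeminormedRing (Matrix (Fin 3) (Fin 3) ℝ) := Matrix.linftyOpSemiNormedRing
  letI : NormedRing (Matrix (Fin 3) (Fin 3) ℝ) := Matrix.linftyOpNormedRing
  letI : NormedAlgebra ℝ (Matrix (Fin 3) (Fin 3) ℝ) := Matrix.linftyOpNormedAlgebra
  have hodd : ∀ k : ℕ, A ^ (2 * k + 1) = ((-1 : ℝ) ^ k) • A := by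
    intro k
    induction k with
    | zero => simp
    | succ n ih =>
      have h2 : 2 * (n + 1) + 1 = (2 * n + 1) + 2 := by ring
      calc A ^ (2 * (n + 1) + 1) = A ^ (2 * n + 1) * A ^ 2 := by rw [h2, pow_add]
        _ = ((-1 : ℝ) ^ n) • (A * A ^ 2) := by rw [ih, smul_mul_assoc]
        _ = ((-1 : ℝ) ^ n) • (A ^ 3) := by rw [← pow_succ']
        _ = ((-1 : ℝ) ^ (n + 1)) • A := by rw [hA, pow_succ]; module
  have heven : ∀ k : ℕ, A ^ (2 * k + 2) = ((-1 : ℝ) ^ k) • (A ^ 2) := by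
    intro k
    induction k with
    | zero => simp
    | succ n ih =>
      have h2 : 2 * (n + 1) + 2 = (2 * n + 2) + 2 := by ring
      calc A ^ (2 * (n + 1) + 2) = A ^ (2 * n + 2) * A ^ 2 := by rw [h2, pow_add]
        _ = ((-1 : ℝ) ^ n) • (A ^ 3 * A) := by
            rw [ih, smul_mul_assoc, ← pow_add, ← pow_succ]
        _ = ((-1 : ℝ) ^ (n + 1)) • (A ^ 2) := by
            rw [hA, pow_succ, neg_mul, ← pow_two]; module
  rw [NormedSpace.exp_eq_tsum (𝕂 := ℝ)]
  refine HasSum.tsum_eq ?_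
  set f : ℕ → Matrix (Fin 3) (Fin 3) ℝ := fun n => ((n.factorial : ℝ)⁻¹) • (t • A) ^ n with hf
  have ho : HasSum (fun k : ℕ => f (2 * k + 1)) (Real.sin t • A) := by
    have h := (Real.hasSum_sin t).smul_const A
    have he : (fun k : ℕ => f (2 * k + 1)) =
        fun n : ℕ => ((-1 : ℝ) ^ n * t ^ (2 * n + 1) / ((2 * n + 1).factorial : ℝ)) • A := by
      funext k
      rw [hf]
      simp only [smul_pow, hodd k, smul_smul]
      congr 1
      have : ((2 * k + 1).factorial : ℝ) ≠ 0 := Nat.cast_ne_zero.mpr (Nat.factorial_ne_zero _)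
      field_simp
    rw [he]
    exact h
  have he2 : HasSum (fun k : ℕ => f (2 * (k + 1))) ((1 - Real.cos t) • (A ^ 2)) := by
    have hcos := Real.hasSum_cos t
    have hc1 : HasSum (fun n : ℕ => (-1 : ℝ) ^ (n + 1) * t ^ (2 * (n + 1)) / ((2 * (n + 1)).factorial : ℝ))
        (Real.cos t - 1) := by
      refine (hasSum_nat_add_iff (f := fun n : ℕ => (-1 : ℝ) ^ n * t ^ (2 * n) / ((2 * n).factorial : ℝ)) 1).mpr ?_
      convert hcos using 1
      · rfl
      simp
    have h := (hc1.neg).smul_const (A ^ 2)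
    have he : (fun k : ℕ => f (2 * (k + 1))) =
        fun n : ℕ => (-((-1 : ℝ) ^ (n + 1) * t ^ (2 * (n + 1)) / ((2 * (n + 1)).factorial : ℝ))) • (A ^ 2) := by
      funext k
      rw [hf]
      have h4 : 2 * (k + 1) = 2 * k + 2 := by ring
      simp only [h4, smul_pow, heven k, smul_smul]
      congr 1
      have : ((2 * k + 2).factorial : ℝ) ≠ 0 := Nat.cast_ne_zero.mpr (Nat.factorial_ne_zero _)
      field_simp
      ring
    rw [he]
    convert h using 2
    ring
  have heS : HasSum (fun k : ℕ => f (2 * k)) (1 + (1 - Real.cos t) • (A ^ 2)) := by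
    have h0 : HasSum (fun k : ℕ => f (2 * k))
        ((1 - Real.cos t) • (A ^ 2) + ∑ i ∈ Finset.range 1, f (2 * i)) :=
      (hasSum_nat_add_iff (f := fun k : ℕ => f (2 * k)) 1).mp he2
    convert h0 using 1
    have hf0 : f 0 = 1 := by simp [hf]
    simp [hf0]
    abel
  have htot := heS.even_add_odd ho
  convert htot using 1
  · rfl
  abel

lemma OmegaL_cube (r : ℝ) (hq : Real.sqrt (1 - r ^ 2) ^ 2 = 1 - r ^ 2) :
    (OmegaL r) ^ 3 = -(OmegaL r) := by
  have h : (OmegaL r) ^ 3 = OmegaL r * OmegaL r * OmegaL r := by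
    rw [pow_succ, pow_two]
  rw [h]
  ext i j
  fin_cases i <;> fin_cases j <;>
    simp [OmegaL, Matrix.mul_apply, Fin.sum_univ_three] <;>
    first
      | ring1
      | linear_combination r * hq
      | linear_combination (-r) * hq
      | linear_combination Real.sqrt (1 - r ^ 2) * hq
      | linear_combination (-Real.sqrt (1 - r ^ 2)) * hq

lemma OmegaR_cube (r : ℝ) (hq : Real.sqrt (1 - r ^ 2) ^ 2 = 1 - r ^ 2) :
    (OmegaR r) ^ 3 = -(OmegaR r) := by
  have h : (OmegaR r) ^ 3 = OmegaR r * OmegaR r * OmegaR r := by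
    rw [pow_succ, pow_two]
  rw [h]
  ext i j
  fin_cases i <;> fin_cases j <;>
    simp [OmegaR, Matrix.mul_apply, Fin.sum_univ_three] <;>
    first
      | ring1
      | linear_combination r * hq
      | linear_combination (-r) * hq
      | linear_combination Real.sqrt (1 - r ^ 2) * hq
      | linear_combination (-Real.sqrt (1 - r ^ 2)) * hq

lemma RL_eq (r : ℝ) (hq : Real.sqrt (1 - r ^ 2) ^ 2 = 1 - r ^ 2) (t : ℝ) :
    RL r t = !![1 - (1 - Real.cos t) * r ^ 2, -(Real.sin t * r),
        (1 - Real.cos t) * (r * Real.sqrt (1 - r ^ 2));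
      Real.sin t * r, Real.cos t, -(Real.sin t * Real.sqrt (1 - r ^ 2));
      (1 - Real.cos t) * (r * Real.sqrt (1 - r ^ 2)), Real.sin t * Real.sqrt (1 - r ^ 2),
        1 - (1 - Real.cos t) * (1 - r ^ 2)] := by
  rw [RL, rodrigues _ (OmegaL_cube r hq) t, pow_two (OmegaL r)]
  ext i j
  fin_cases i <;> fin_cases j <;>
    simp [OmegaL, Matrix.mul_apply, Fin.sum_univ_three, Matrix.one_apply] <;>
    first
      | ring1
      | linear_combination (Real.cos t - 1) * hq
      | linear_combination (1 - Real.cos t) * hq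
      | exact Or.inl (mul_comm _ _)

lemma RR_eq (r : ℝ) (hq : Real.sqrt (1 - r ^ 2) ^ 2 = 1 - r ^ 2) (t : ℝ) :
    RR r t = !![1 - (1 - Real.cos t) * r ^ 2, -(Real.sin t * r),
        -((1 - Real.cos t) * (r * Real.sqrt (1 - r ^ 2)));
      Real.sin t * r, Real.cos t, Real.sin t * Real.sqrt (1 - r ^ 2);
      -((1 - Real.cos t) * (r * Real.sqrt (1 - r ^ 2))), -(Real.sin t * Real.sqrt (1 - r ^ 2)),
        1 - (1 - Real.cos t) * (1 - r ^ 2)] := by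
  rw [RR, rodrigues _ (OmegaR_cube r hq) t, pow_two (OmegaR r)]
  ext i j
  fin_cases i <;> fin_cases j <;>
    simp [OmegaR, Matrix.mul_apply, Fin.sum_univ_three, Matrix.one_apply] <;>
    first
      | ring1
      | linear_combination (Real.cos t - 1) * hq
      | linear_combination (1 - Real.cos t) * hq
      | exact Or.inl (mul_comm _ _)

set_option maxHeartbeats 2000000 in
theorem stmt_17 (r β φ : ℝ) (hr : 1 / Real.sqrt 2 < r) (hr' : r ≤ Real.sqrt 3 / 2)
    (hβ : β ∈ Set.Ioo (0 : ℝ) Real.pi)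
    (g C D : ℝ)
    (hg : g = 5 - 10 * r ^ 2 + 6 * r ^ 4 + 4 * (2 * r ^ 2 - 1) * (r ^ 2 - 1) * Real.cos β -
      2 * r ^ 2 * (1 - r ^ 2) * Real.cos (2 * β))
    (hC : C = 2 * (3 * r ^ 2 - 2) * (r ^ 2 - 1) +
      4 * (2 * r ^ 2 - 1) * (r ^ 2 - 1) * Real.cos β +
      (2 * r ^ 4 - 2 * r ^ 2 + 1) * Real.cos (2 * β))
    (hD : D = 2 * Real.sin β * (2 * (r ^ 2 - 1) + (2 * r ^ 2 - 1) * Real.cos β))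
    (hsin : Real.sin φ = -D / g) (hcos : Real.cos φ = -C / g) :
    (RL r φ * RR r (Real.pi - β) * RL r (Real.pi - β) * RR r φ) 1 2 =
      2 * r ^ 2 * Real.sqrt (1 - r ^ 2) * (4 * r ^ 2 - 3 + (4 * r ^ 2 - 1) * Real.cos β) *
        Real.sin β ∧
    (RL r Real.pi * RR r (Real.pi + β) * RL r (Real.pi + β) * RR r Real.pi) 1 2 =
      2 * r ^ 2 * Real.sqrt (1 - r ^ 2) * (4 * r ^ 2 - 3 + (4 * r ^ 2 - 1) * Real.cos β) *
        Real.sin β := by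
  have hr0 : 0 < r := lt_trans (by positivity) hr
  have hr1 : r ^ 2 ≤ 1 := by
    have h3 : Real.sqrt 3 / 2 ≤ 1 := by
      rw [div_le_one (by norm_num)]
      nlinarith [Real.sq_sqrt (by norm_num : (3:ℝ) ≥ 0), Real.sqrt_nonneg 3]
    nlinarith
  have hq : Real.sqrt (1 - r ^ 2) ^ 2 = 1 - r ^ 2 := Real.sq_sqrt (by linarith)
  have hg0 : g ≠ 0 := by
    intro h
    rw [h, div_zero] at hsin hcos
    have hpy := Real.sin_sq_add_cos_sq φ
    rw [hsin, hcos] at hpy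
    norm_num at hpy
  have hs1 : g * Real.sin φ = -D := by rw [hsin]; field_simp
  have hc1 : g * Real.cos φ = -C := by rw [hcos]; field_simp
  have hpy : Real.sin φ ^ 2 + Real.cos φ ^ 2 = 1 := Real.sin_sq_add_cos_sq φ
  have hsB : Real.sin β ^ 2 = 1 - Real.cos β ^ 2 := Real.sin_sq β
  have hc2 : Real.cos (2 * β) = 2 * Real.cos β ^ 2 - 1 := Real.cos_two_mul β
  constructor
  · rw [RL_eq r hq, RR_eq r hq, RL_eq r hq, RR_eq r hq]
    simp only [Real.sin_pi_sub, Real.cos_pi_sub]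
    simp [Matrix.mul_apply, Fin.sum_univ_three]
    rw [← mul_right_inj' (pow_ne_zero 2 hg0 : g ^ 2 ≠ 0)]
    linear_combination ((-1) * r ^ 2 * Real.sqrt (1 - r ^ 2) * g + (-1) * r ^ 2 * Real.sqrt (1 - r ^ 2) ^ 3 * g + (3) * r ^ 4 * Real.sqrt (1 - r ^ 2) * g + (4) * r ^ 4 * Real.sqrt (1 - r ^ 2) ^ 3 * g + (-4) * r ^ 6 * Real.sqrt (1 - r ^ 2) * g + (-2) * Real.cos β * r ^ 2 * Real.sqrt (1 - r ^ 2) ^ 3 * g + (6) * Real.cos β * r ^ 4 * Real.sqrt (1 - r ^ 2) * g + (8) * Real.cos β * r ^ 4 * Real.sqrt (1 - r ^ 2) ^ 3 * g + (-8) * Real.cos β * r ^ 6 * Real.sqrt (1 - r ^ 2) * g + (-1) * Real.cos β ^ 2 * r ^ 2 * Real.sqrt (1 - r ^ 2) * g + (-1) * Real.cos β ^ 2 * r ^ 2 * Real.sqrt (1 - r ^ 2) ^ 3 * g + (3) * Real.cos β ^ 2 * r ^ 4 * Real.sqrt (1 - r ^ 2) * g + (4) * Real.cos β ^ 2 * r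 ^ 4 * Real.sqrt (1 - r ^ 2) ^ 3 * g + (-4) * Real.cos β ^ 2 * r ^ 6 * Real.sqrt (1 - r ^ 2) * g + (1) * Real.sin β * r ^ 2 * Real.sqrt (1 - r ^ 2) * D + (3) * Real.sin β * r ^ 2 * Real.sqrt (1 - r ^ 2) ^ 3 * D + (-1) * Real.sin β * r ^ 4 * Real.sqrt (1 - r ^ 2) * D + (-1) * Real.sin β * Real.cos β * r ^ 2 * Real.sqrt (1 - r ^ 2) * D + (3) * Real.sin β * Real.cos β * r ^ 2 * Real.sqrt (1 - r ^ 2) ^ 3 * D + (-1) * Real.sin β * Real.cos β * r ^ 4 * Real.sqrt (1 - r ^ 2) * D + (-2) * Real.sin β ^ 2 * r ^ 2 * Real.sqrt (1 - r ^ 2) ^ 3 * g + (2) * Real.sin β ^ 2 * r ^ 4 * Real.sqrt (1 - r ^ 2) * g + (2) * Real.cos φ * r ^ 2 * Real.sqrt (1 - r ^ 2) * g + (2) * Real.cos φ * r ^ 2 * Real.sqrt (1 - r ^ 2) ^ 3 * g + (-6) * Real.cos φ * r ^ 4 * Real.sqrt (1 - r ^ 2) * g + (-4) * Real.cos φ *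 r ^ 4 * Real.sqrt (1 - r ^ 2) ^ 3 * g + (4) * Real.cos φ * r ^ 6 * Real.sqrt (1 - r ^ 2) * g + (4) * Real.cos φ * Real.cos β * r ^ 2 * Real.sqrt (1 - r ^ 2) * g + (4) * Real.cos φ * Real.cos β * r ^ 2 * Real.sqrt (1 - r ^ 2) ^ 3 * g + (-12) * Real.cos φ * Real.cos β * r ^ 4 * Real.sqrt (1 - r ^ 2) * g + (-8) * Real.cos φ * Real.cos β * r ^ 4 * Real.sqrt (1 - r ^ 2) ^ 3 * g + (8) * Real.cos φ * Real.cos β * r ^ 6 * Real.sqrt (1 - r ^ 2) * g + (4) * Real.cos φ * Real.cos β ^ 2 * r ^ 2 * Real.sqrt (1 - r ^ 2) * g + (2) * Real.cos φ * Real.cos β ^ 2 * r ^ 2 * Real.sqrt (1 - r ^ 2) ^ 3 * g + (-6) * Real.cos φ * Real.cos β ^ 2 * r ^ 4 * Real.sqrt (1 - r ^ 2) * g + (-4) * Real.cos φ * Real.cos β ^ 2 * r ^ 4 * Real.sqrt (1 - r ^ 2) ^ 3 * g + (4) * Real.cos φ * Real.cos β ^ 2 * r ^ 6 * Real.sqrt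 (1 - r ^ 2) * g + (2) * Real.cos φ * Real.sin β ^ 2 * r ^ 2 * Real.sqrt (1 - r ^ 2) ^ 3 * g + (-2) * Real.cos φ * Real.sin β ^ 2 * r ^ 4 * Real.sqrt (1 - r ^ 2) * g + (-1) * Real.sin φ * Real.sin β * r ^ 2 * Real.sqrt (1 - r ^ 2) * g + (-3) * Real.sin φ * Real.sin β * r ^ 2 * Real.sqrt (1 - r ^ 2) ^ 3 * g + (1) * Real.sin φ * Real.sin β * r ^ 4 * Real.sqrt (1 - r ^ 2) * g + (1) * Real.sin φ * Real.sin β * Real.cos β * r ^ 2 * Real.sqrt (1 - r ^ 2) * g + (-3) * Real.sin φ * Real.sin β * Real.cos β * r ^ 2 * Real.sqrt (1 - r ^ 2) ^ 3 * g + (1) * Real.sin φ * Real.sin β * Real.cos β * r ^ 4 * Real.sqrt (1 - r ^ 2) * g) * hs1 + ((-2) * r ^ 2 * Real.sqrt (1 - r ^ 2) * D + (-2) * r ^ 2 * Real.sqrt (1 - r ^ 2) ^ 3 * D + (6) * r ^ 4 * Real.sqrt (1 - r ^ 2) * D + (4) * r ^ 4 * Real.sqrt (1 - r ^ 2) ^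 3 * D + (-4) * r ^ 6 * Real.sqrt (1 - r ^ 2) * D + (-4) * Real.cos β * r ^ 2 * Real.sqrt (1 - r ^ 2) * D + (-4) * Real.cos β * r ^ 2 * Real.sqrt (1 - r ^ 2) ^ 3 * D + (12) * Real.cos β * r ^ 4 * Real.sqrt (1 - r ^ 2) * D + (8) * Real.cos β * r ^ 4 * Real.sqrt (1 - r ^ 2) ^ 3 * D + (-8) * Real.cos β * r ^ 6 * Real.sqrt (1 - r ^ 2) * D + (-4) * Real.cos β ^ 2 * r ^ 2 * Real.sqrt (1 - r ^ 2) * D + (-2) * Real.cos β ^ 2 * r ^ 2 * Real.sqrt (1 - r ^ 2) ^ 3 * D + (6) * Real.cos β ^ 2 * r ^ 4 * Real.sqrt (1 - r ^ 2) * D + (4) * Real.cos β ^ 2 * r ^ 4 * Real.sqrt (1 - r ^ 2) ^ 3 * D + (-4) * Real.cos β ^ 2 * r ^ 6 * Real.sqrt (1 - r ^ 2) * D + (-3) * Real.sin β * r ^ 2 * Real.sqrt (1 - r ^ 2) * C + (-1) * Real.sin β * r ^ 2 * Real.sqrt (1 - r ^ 2) * g + (-1) * Real.sin β * r ^ 2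 * Real.sqrt (1 - r ^ 2) ^ 3 * C + (-1) * Real.sin β * r ^ 2 * Real.sqrt (1 - r ^ 2) ^ 3 * g + (3) * Real.sin β * r ^ 4 * Real.sqrt (1 - r ^ 2) * C + (3) * Real.sin β * r ^ 4 * Real.sqrt (1 - r ^ 2) * g + (-1) * Real.sin β * Real.cos β * r ^ 2 * Real.sqrt (1 - r ^ 2) * C + (1) * Real.sin β * Real.cos β * r ^ 2 * Real.sqrt (1 - r ^ 2) * g + (-1) * Real.sin β * Real.cos β * r ^ 2 * Real.sqrt (1 - r ^ 2) ^ 3 * C + (-1) * Real.sin β * Real.cos β * r ^ 2 * Real.sqrt (1 - r ^ 2) ^ 3 * g + (3) * Real.sin β * Real.cos β * r ^ 4 * Real.sqrt (1 - r ^ 2) * C + (3) * Real.sin β * Real.cos β * r ^ 4 * Real.sqrt (1 - r ^ 2) * g + (-2) * Real.sin β ^ 2 * r ^ 2 * Real.sqrt (1 - r ^ 2) ^ 3 * D + (2) * Real.sin β ^ 2 * r ^ 4 * Real.sqrt (1 - r ^ 2) * D + (3) * Real.cos φ * Real.sin β * r ^ 2 * Real.sqrt (1 - r ^ 2) * g +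 (1) * Real.cos φ * Real.sin β * r ^ 2 * Real.sqrt (1 - r ^ 2) ^ 3 * g + (-3) * Real.cos φ * Real.sin β * r ^ 4 * Real.sqrt (1 - r ^ 2) * g + (1) * Real.cos φ * Real.sin β * Real.cos β * r ^ 2 * Real.sqrt (1 - r ^ 2) * g + (1) * Real.cos φ * Real.sin β * Real.cos β * r ^ 2 * Real.sqrt (1 - r ^ 2) ^ 3 * g + (-3) * Real.cos φ * Real.sin β * Real.cos β * r ^ 4 * Real.sqrt (1 - r ^ 2) * g) * hc1 + ((1) * r ^ 2 * Real.sqrt (1 - r ^ 2) * D + (1) * r ^ 2 * Real.sqrt (1 - r ^ 2) ^ 3 * D + (-3) * r ^ 4 * Real.sqrt (1 - r ^ 2) * D + (-4) * r ^ 4 * Real.sqrt (1 - r ^ 2) ^ 3 * D + (4) * r ^ 6 * Real.sqrt (1 - r ^ 2) * D + (2) * Real.cos β * r ^ 2 * Real.sqrt (1 - r ^ 2) ^ 3 * D + (-6) * Real.cos β * r ^ 4 * Real.sqrt (1 - r ^ 2) * D + (-8) * Real.cos β * r ^ 4 * Real.sqrt (1 - r ^ 2) ^ 3 * D + (8) *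 Real.cos β * r ^ 6 * Real.sqrt (1 - r ^ 2) * D + (1) * Real.cos β ^ 2 * r ^ 2 * Real.sqrt (1 - r ^ 2) * D + (1) * Real.cos β ^ 2 * r ^ 2 * Real.sqrt (1 - r ^ 2) ^ 3 * D + (-3) * Real.cos β ^ 2 * r ^ 4 * Real.sqrt (1 - r ^ 2) * D + (-4) * Real.cos β ^ 2 * r ^ 4 * Real.sqrt (1 - r ^ 2) ^ 3 * D + (4) * Real.cos β ^ 2 * r ^ 6 * Real.sqrt (1 - r ^ 2) * D + (30) * Real.sin β * r ^ 2 * Real.sqrt (1 - r ^ 2) + (1) * Real.sin β * r ^ 2 * Real.sqrt (1 - r ^ 2) * C + (6) * Real.sin β * r ^ 2 * Real.sqrt (1 - r ^ 2) * g + (1) * Real.sin β * r ^ 2 * Real.sqrt (1 - r ^ 2) ^ 3 * C + (-100) * Real.sin β * r ^ 4 * Real.sqrt (1 - r ^ 2) + (-12) * Real.sin β * r ^ 4 * Real.sqrt (1 - r ^ 2) * Real.cos (2 * β) + (-3) * Real.sin β * r ^ 4 * Real.sqrt (1 - r ^ 2) * C + (-8) * Real.sin β * r ^ 4 * Real.sqrt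 (1 - r ^ 2) * g + (116) * Real.sin β * r ^ 6 * Real.sqrt (1 - r ^ 2) + (28) * Real.sin β * r ^ 6 * Real.sqrt (1 - r ^ 2) * Real.cos (2 * β) + (-48) * Real.sin β * r ^ 8 * Real.sqrt (1 - r ^ 2) + (-16) * Real.sin β * r ^ 8 * Real.sqrt (1 - r ^ 2) * Real.cos (2 * β) + (34) * Real.sin β * Real.cos β * r ^ 2 * Real.sqrt (1 - r ^ 2) + (-1) * Real.sin β * Real.cos β * r ^ 2 * Real.sqrt (1 - r ^ 2) * C + (2) * Real.sin β * Real.cos β * r ^ 2 * Real.sqrt (1 - r ^ 2) * g + (1) * Real.sin β * Real.cos β * r ^ 2 * Real.sqrt (1 - r ^ 2) ^ 3 * C + (-164) * Real.sin β * Real.cos β * r ^ 4 * Real.sqrt (1 - r ^ 2) + (-4) * Real.sin β * Real.cos β * r ^ 4 * Real.sqrt (1 - r ^ 2) * Real.cos (2 * β) + (-3) * Real.sin β * Real.cos β * r ^ 4 * Real.sqrt (1 - r ^ 2) * C + (-8) * Real.sin β * Real.cos β * r ^ 4 * Real.sqrt (1 - r ^ 2) * g + (236) * Real.sin β * Real.cos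 β * r ^ 6 * Real.sqrt (1 - r ^ 2) + (20) * Real.sin β * Real.cos β * r ^ 6 * Real.sqrt (1 - r ^ 2) * Real.cos (2 * β) + (-112) * Real.sin β * Real.cos β * r ^ 8 * Real.sqrt (1 - r ^ 2) + (-16) * Real.sin β * Real.cos β * r ^ 8 * Real.sqrt (1 - r ^ 2) * Real.cos (2 * β) + (8) * Real.sin β * Real.cos β ^ 2 * r ^ 2 * Real.sqrt (1 - r ^ 2) + (-56) * Real.sin β * Real.cos β ^ 2 * r ^ 4 * Real.sqrt (1 - r ^ 2) + (112) * Real.sin β * Real.cos β ^ 2 * r ^ 6 * Real.sqrt (1 - r ^ 2) + (-64) * Real.sin β * Real.cos β ^ 2 * r ^ 8 * Real.sqrt (1 - r ^ 2) + (2) * Real.sin β ^ 2 * r ^ 2 * Real.sqrt (1 - r ^ 2) ^ 3 * D + (-2) * Real.sin β ^ 2 * r ^ 4 * Real.sqrt (1 - r ^ 2) * D) * hg + ((2) * r ^ 2 * Real.sqrt (1 - r ^ 2) * D + (2) * r ^ 2 * Real.sqrt (1 - r ^ 2) ^ 3 * D + (-6) * r ^ 4 * Real.sqrt (1 - r ^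 2) * D + (-4) * r ^ 4 * Real.sqrt (1 - r ^ 2) ^ 3 * D + (4) * r ^ 6 * Real.sqrt (1 - r ^ 2) * D + (4) * Real.cos β * r ^ 2 * Real.sqrt (1 - r ^ 2) * D + (4) * Real.cos β * r ^ 2 * Real.sqrt (1 - r ^ 2) ^ 3 * D + (-12) * Real.cos β * r ^ 4 * Real.sqrt (1 - r ^ 2) * D + (-8) * Real.cos β * r ^ 4 * Real.sqrt (1 - r ^ 2) ^ 3 * D + (8) * Real.cos β * r ^ 6 * Real.sqrt (1 - r ^ 2) * D + (4) * Real.cos β ^ 2 * r ^ 2 * Real.sqrt (1 - r ^ 2) * D + (2) * Real.cos β ^ 2 * r ^ 2 * Real.sqrt (1 - r ^ 2) ^ 3 * D + (-6) * Real.cos β ^ 2 * r ^ 4 * Real.sqrt (1 - r ^ 2) * D + (-4) * Real.cos β ^ 2 * r ^ 4 * Real.sqrt (1 - r ^ 2) ^ 3 * D + (4) * Real.cos β ^ 2 * r ^ 6 * Real.sqrt (1 - r ^ 2) * D + (17) * Real.sin β * r ^ 2 * Real.sqrt (1 - r ^ 2) + (3) * Real.sin β * r ^ 2 * Real.sqrt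 (1 - r ^ 2) * Real.cos (2 * β) + (3) * Real.sin β * r ^ 2 * Real.sqrt (1 - r ^ 2) * C + (9) * Real.sin β * r ^ 2 * Real.sqrt (1 - r ^ 2) ^ 3 + (1) * Real.sin β * r ^ 2 * Real.sqrt (1 - r ^ 2) ^ 3 * Real.cos (2 * β) + (1) * Real.sin β * r ^ 2 * Real.sqrt (1 - r ^ 2) ^ 3 * C + (-67) * Real.sin β * r ^ 4 * Real.sqrt (1 - r ^ 2) + (-11) * Real.sin β * r ^ 4 * Real.sqrt (1 - r ^ 2) * Real.cos (2 * β) + (-3) * Real.sin β * r ^ 4 * Real.sqrt (1 - r ^ 2) * C + (-20) * Real.sin β * r ^ 4 * Real.sqrt (1 - r ^ 2) ^ 3 + (-4) * Real.sin β * r ^ 4 * Real.sqrt (1 - r ^ 2) ^ 3 * Real.cos (2 * β) + (84) * Real.sin β * r ^ 6 * Real.sqrt (1 - r ^ 2) + (20) * Real.sin β * r ^ 6 * Real.sqrt (1 - r ^ 2) * Real.cos (2 * β) + (12) * Real.sin β * r ^ 6 * Real.sqrt (1 - r ^ 2) ^ 3 + (4) * Real.sin β * r ^ 6 * Real.sqrt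 (1 - r ^ 2) ^ 3 * Real.cos (2 * β) + (-36) * Real.sin β * r ^ 8 * Real.sqrt (1 - r ^ 2) + (-12) * Real.sin β * r ^ 8 * Real.sqrt (1 - r ^ 2) * Real.cos (2 * β) + (15) * Real.sin β * Real.cos β * r ^ 2 * Real.sqrt (1 - r ^ 2) + (1) * Real.sin β * Real.cos β * r ^ 2 * Real.sqrt (1 - r ^ 2) * Real.cos (2 * β) + (1) * Real.sin β * Real.cos β * r ^ 2 * Real.sqrt (1 - r ^ 2) * C + (17) * Real.sin β * Real.cos β * r ^ 2 * Real.sqrt (1 - r ^ 2) ^ 3 + (1) * Real.sin β * Real.cos β * r ^ 2 * Real.sqrt (1 - r ^ 2) ^ 3 * Real.cos (2 * β) + (1) * Real.sin β * Real.cos β * r ^ 2 * Real.sqrt (1 - r ^ 2) ^ 3 * C + (-99) * Real.sin β * Real.cos β * r ^ 4 * Real.sqrt (1 - r ^ 2) + (-3) * Real.sin β * Real.cos β * r ^ 4 * Real.sqrt (1 - r ^ 2) * Real.cos (2 * β) + (-3) * Real.sin β * Real.cos β * r ^ 4 * Real.sqrt (1 - r ^ 2) * C + (-44) * Real.sin β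 * Real.cos β * r ^ 4 * Real.sqrt (1 - r ^ 2) ^ 3 + (-4) * Real.sin β * Real.cos β * r ^ 4 * Real.sqrt (1 - r ^ 2) ^ 3 * Real.cos (2 * β) + (164) * Real.sin β * Real.cos β * r ^ 6 * Real.sqrt (1 - r ^ 2) + (12) * Real.sin β * Real.cos β * r ^ 6 * Real.sqrt (1 - r ^ 2) * Real.cos (2 * β) + (28) * Real.sin β * Real.cos β * r ^ 6 * Real.sqrt (1 - r ^ 2) ^ 3 + (4) * Real.sin β * Real.cos β * r ^ 6 * Real.sqrt (1 - r ^ 2) ^ 3 * Real.cos (2 * β) + (-84) * Real.sin β * Real.cos β * r ^ 8 * Real.sqrt (1 - r ^ 2) + (-12) * Real.sin β * Real.cos β * r ^ 8 * Real.sqrt (1 - r ^ 2) * Real.cos (2 * β) + (8) * Real.sin β * Real.cos β ^ 2 * r ^ 2 * Real.sqrt (1 - r ^ 2) ^ 3 + (-24) * Real.sin β * Real.cos β ^ 2 * r ^ 4 * Real.sqrt (1 - r ^ 2) + (-24) * Real.sin β * Real.cos β ^ 2 * r ^ 4 * Real.sqrt (1 - r ^ 2) ^ 3 + (72) * Real.sin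 β * Real.cos β ^ 2 * r ^ 6 * Real.sqrt (1 - r ^ 2) + (16) * Real.sin β * Real.cos β ^ 2 * r ^ 6 * Real.sqrt (1 - r ^ 2) ^ 3 + (-48) * Real.sin β * Real.cos β ^ 2 * r ^ 8 * Real.sqrt (1 - r ^ 2) + (2) * Real.sin β ^ 2 * r ^ 2 * Real.sqrt (1 - r ^ 2) ^ 3 * D + (-2) * Real.sin β ^ 2 * r ^ 4 * Real.sqrt (1 - r ^ 2) * D) * hC + ((13) * r ^ 2 * Real.sqrt (1 - r ^ 2) + (2) * r ^ 2 * Real.sqrt (1 - r ^ 2) * Real.cos (2 * β) + (13) * r ^ 2 * Real.sqrt (1 - r ^ 2) ^ 3 + (2) * r ^ 2 * Real.sqrt (1 - r ^ 2) ^ 3 * Real.cos (2 * β) + (-69) * r ^ 4 * Real.sqrt (1 - r ^ 2) + (-12) * r ^ 4 * Real.sqrt (1 - r ^ 2) * Real.cos (2 * β) + (-66) * r ^ 4 * Real.sqrt (1 - r ^ 2) ^ 3 + (-10) * r ^ 4 * Real.sqrt (1 - r ^ 2) ^ 3 * Real.cos (2 * β) + (144) * r ^ 6 * Real.sqrt (1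 - r ^ 2) + (28) * r ^ 6 * Real.sqrt (1 - r ^ 2) * Real.cos (2 * β) + (98) * r ^ 6 * Real.sqrt (1 - r ^ 2) ^ 3 + (22) * r ^ 6 * Real.sqrt (1 - r ^ 2) ^ 3 * Real.cos (2 * β) + (-134) * r ^ 8 * Real.sqrt (1 - r ^ 2) + (-34) * r ^ 8 * Real.sqrt (1 - r ^ 2) * Real.cos (2 * β) + (-48) * r ^ 8 * Real.sqrt (1 - r ^ 2) ^ 3 + (-16) * r ^ 8 * Real.sqrt (1 - r ^ 2) ^ 3 * Real.cos (2 * β) + (48) * r ^ 10 * Real.sqrt (1 - r ^ 2) + (16) * r ^ 10 * Real.sqrt (1 - r ^ 2) * Real.cos (2 * β) + (28) * Real.cos β * r ^ 2 * Real.sqrt (1 - r ^ 2) + (4) * Real.cos β * r ^ 2 * Real.sqrt (1 - r ^ 2) * Real.cos (2 * β) + (38) * Real.cos β * r ^ 2 * Real.sqrt (1 - r ^ 2) ^ 3 + (4) * Real.cos β * r ^ 2 * Real.sqrt (1 - r ^ 2) ^ 3 * Real.cos (2 * β) + (-190) * Real.cos β * r ^ 4 * Real.sqrt (1 - r ^ 2)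 + (-20) * Real.cos β * r ^ 4 * Real.sqrt (1 - r ^ 2) * Real.cos (2 * β) + (-200) * Real.cos β * r ^ 4 * Real.sqrt (1 - r ^ 2) ^ 3 + (-20) * Real.cos β * r ^ 4 * Real.sqrt (1 - r ^ 2) ^ 3 * Real.cos (2 * β) + (440) * Real.cos β * r ^ 6 * Real.sqrt (1 - r ^ 2) + (52) * Real.cos β * r ^ 6 * Real.sqrt (1 - r ^ 2) * Real.cos (2 * β) + (316) * Real.cos β * r ^ 6 * Real.sqrt (1 - r ^ 2) ^ 3 + (44) * Real.cos β * r ^ 6 * Real.sqrt (1 - r ^ 2) ^ 3 * Real.cos (2 * β) + (-436) * Real.cos β * r ^ 8 * Real.sqrt (1 - r ^ 2) + (-68) * Real.cos β * r ^ 8 * Real.sqrt (1 - r ^ 2) * Real.cos (2 * β) + (-160) * Real.cos β * r ^ 8 * Real.sqrt (1 - r ^ 2) ^ 3 + (-32) * Real.cos β * r ^ 8 * Real.sqrt (1 - r ^ 2) ^ 3 * Real.cos (2 * β) + (160) * Real.cos β * r ^ 10 * Real.sqrt (1 - r ^ 2) + (32) * Real.cos β * r ^ 10 * Real.sqrt (1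 - r ^ 2) * Real.cos (2 * β) + (37) * Real.cos β ^ 2 * r ^ 2 * Real.sqrt (1 - r ^ 2) + (4) * Real.cos β ^ 2 * r ^ 2 * Real.sqrt (1 - r ^ 2) * Real.cos (2 * β) + (37) * Real.cos β ^ 2 * r ^ 2 * Real.sqrt (1 - r ^ 2) ^ 3 + (2) * Real.cos β ^ 2 * r ^ 2 * Real.sqrt (1 - r ^ 2) ^ 3 * Real.cos (2 * β) + (-209) * Real.cos β ^ 2 * r ^ 4 * Real.sqrt (1 - r ^ 2) + (-16) * Real.cos β ^ 2 * r ^ 4 * Real.sqrt (1 - r ^ 2) * Real.cos (2 * β) + (-202) * Real.cos β ^ 2 * r ^ 4 * Real.sqrt (1 - r ^ 2) ^ 3 + (-10) * Real.cos β ^ 2 * r ^ 4 * Real.sqrt (1 - r ^ 2) ^ 3 * Real.cos (2 * β) + (468) * Real.cos β ^ 2 * r ^ 6 * Real.sqrt (1 - r ^ 2) + (32) * Real.cos β ^ 2 * r ^ 6 * Real.sqrt (1 - r ^ 2) * Real.cos (2 * β) + (338) * Real.cos β ^ 2 * r ^ 6 * Real.sqrt (1 - r ^ 2) ^ 3 +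 (22) * Real.cos β ^ 2 * r ^ 6 * Real.sqrt (1 - r ^ 2) ^ 3 * Real.cos (2 * β) + (-470) * Real.cos β ^ 2 * r ^ 8 * Real.sqrt (1 - r ^ 2) + (-34) * Real.cos β ^ 2 * r ^ 8 * Real.sqrt (1 - r ^ 2) * Real.cos (2 * β) + (-176) * Real.cos β ^ 2 * r ^ 8 * Real.sqrt (1 - r ^ 2) ^ 3 + (-16) * Real.cos β ^ 2 * r ^ 8 * Real.sqrt (1 - r ^ 2) ^ 3 * Real.cos (2 * β) + (176) * Real.cos β ^ 2 * r ^ 10 * Real.sqrt (1 - r ^ 2) + (16) * Real.cos β ^ 2 * r ^ 10 * Real.sqrt (1 - r ^ 2) * Real.cos (2 * β) + (20) * Real.cos β ^ 3 * r ^ 2 * Real.sqrt (1 - r ^ 2) + (12) * Real.cos β ^ 3 * r ^ 2 * Real.sqrt (1 - r ^ 2) ^ 3 + (-96) * Real.cos β ^ 3 * r ^ 4 * Real.sqrt (1 - r ^ 2) + (-68) * Real.cos β ^ 3 * r ^ 4 * Real.sqrt (1 - r ^ 2) ^ 3 + (180) * Real.cos β ^ 3 * r ^ 6 * Real.sqrt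 (1 - r ^ 2) + (120) * Real.cos β ^ 3 * r ^ 6 * Real.sqrt (1 - r ^ 2) ^ 3 + (-168) * Real.cos β ^ 3 * r ^ 8 * Real.sqrt (1 - r ^ 2) + (-64) * Real.cos β ^ 3 * r ^ 8 * Real.sqrt (1 - r ^ 2) ^ 3 + (64) * Real.cos β ^ 3 * r ^ 10 * Real.sqrt (1 - r ^ 2) + (-1) * Real.sin β * r ^ 2 * Real.sqrt (1 - r ^ 2) * D + (-3) * Real.sin β * r ^ 2 * Real.sqrt (1 - r ^ 2) ^ 3 * D + (1) * Real.sin β * r ^ 4 * Real.sqrt (1 - r ^ 2) * D + (1) * Real.sin β * Real.cos β * r ^ 2 * Real.sqrt (1 - r ^ 2) * D + (-3) * Real.sin β * Real.cos β * r ^ 2 * Real.sqrt (1 - r ^ 2) ^ 3 * D + (1) * Real.sin β * Real.cos β * r ^ 4 * Real.sqrt (1 - r ^ 2) * D + (4) * Real.sin β ^ 2 * r ^ 2 * Real.sqrt (1 - r ^ 2) + (30) * Real.sin β ^ 2 * r ^ 2 * Real.sqrt (1 - r ^ 2) ^ 3 + (2) * Real.sin β ^ 2 * r ^ 2 * Real.sqrt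 (1 - r ^ 2) ^ 3 * Real.cos (2 * β) + (-26) * Real.sin β ^ 2 * r ^ 4 * Real.sqrt (1 - r ^ 2) + (-2) * Real.sin β ^ 2 * r ^ 4 * Real.sqrt (1 - r ^ 2) * Real.cos (2 * β) + (-52) * Real.sin β ^ 2 * r ^ 4 * Real.sqrt (1 - r ^ 2) ^ 3 + (-8) * Real.sin β ^ 2 * r ^ 4 * Real.sqrt (1 - r ^ 2) ^ 3 * Real.cos (2 * β) + (44) * Real.sin β ^ 2 * r ^ 6 * Real.sqrt (1 - r ^ 2) + (8) * Real.sin β ^ 2 * r ^ 6 * Real.sqrt (1 - r ^ 2) * Real.cos (2 * β) + (24) * Real.sin β ^ 2 * r ^ 6 * Real.sqrt (1 - r ^ 2) ^ 3 + (8) * Real.sin β ^ 2 * r ^ 6 * Real.sqrt (1 - r ^ 2) ^ 3 * Real.cos (2 * β) + (-24) * Real.sin β ^ 2 * r ^ 8 * Real.sqrt (1 - r ^ 2) + (-8) * Real.sin β ^ 2 * r ^ 8 * Real.sqrt (1 - r ^ 2) * Real.cos (2 * β) + (-2) * Real.sin β ^ 2 * Real.cos β * r ^ 2 * Real.sqrt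 (1 - r ^ 2) + (34) * Real.sin β ^ 2 * Real.cos β * r ^ 2 * Real.sqrt (1 - r ^ 2) ^ 3 + (-22) * Real.sin β ^ 2 * Real.cos β * r ^ 4 * Real.sqrt (1 - r ^ 2) + (-72) * Real.sin β ^ 2 * Real.cos β * r ^ 4 * Real.sqrt (1 - r ^ 2) ^ 3 + (56) * Real.sin β ^ 2 * Real.cos β * r ^ 6 * Real.sqrt (1 - r ^ 2) + (32) * Real.sin β ^ 2 * Real.cos β * r ^ 6 * Real.sqrt (1 - r ^ 2) ^ 3 + (-32) * Real.sin β ^ 2 * Real.cos β * r ^ 8 * Real.sqrt (1 - r ^ 2) + (-2) * Real.sin β ^ 2 * Real.cos β ^ 2 * r ^ 2 * Real.sqrt (1 - r ^ 2) + (6) * Real.sin β ^ 2 * Real.cos β ^ 2 * r ^ 2 * Real.sqrt (1 - r ^ 2) ^ 3 + (2) * Real.sin β ^ 2 * Real.cos β ^ 2 * r ^ 4 * Real.sqrt (1 - r ^ 2) + (-12) * Real.sin β ^ 2 * Real.cos β ^ 2 * r ^ 4 * Real.sqrt (1 - r ^ 2) ^ 3 + (4) * Real.sin β ^ 2 * Real.cos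 β ^ 2 * r ^ 6 * Real.sqrt (1 - r ^ 2)) * hD + ((18) * Real.sin β * r ^ 2 * Real.sqrt (1 - r ^ 2) + (3) * Real.sin β * r ^ 2 * Real.sqrt (1 - r ^ 2) * Real.cos (2 * β) + (4) * Real.sin β * r ^ 2 * Real.sqrt (1 - r ^ 2) ^ 3 + (1) * Real.sin β * r ^ 2 * Real.sqrt (1 - r ^ 2) ^ 3 * Real.cos (2 * β) + (-222) * Real.sin β * r ^ 4 * Real.sqrt (1 - r ^ 2) + (-17) * Real.sin β * r ^ 4 * Real.sqrt (1 - r ^ 2) * Real.cos (2 * β) + (-10) * Real.sin β * r ^ 4 * Real.sqrt (1 - r ^ 2) ^ 3 + (-6) * Real.sin β * r ^ 4 * Real.sqrt (1 - r ^ 2) ^ 3 * Real.cos (2 * β) + (748) * Real.sin β * r ^ 6 * Real.sqrt (1 - r ^ 2) + (72) * Real.sin β * r ^ 6 * Real.sqrt (1 - r ^ 2) * Real.cos (2 * β) + (-10) * Real.sin β * r ^ 6 * Real.sqrt (1 - r ^ 2) ^ 3 + (14) * Real.sin β * r ^ 6 * Real.sqrt (1 - r ^ 2) ^ 3 * Real.cos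 (2 * β) + (-1114) * Real.sin β * r ^ 8 * Real.sqrt (1 - r ^ 2) + (-154) * Real.sin β * r ^ 8 * Real.sqrt (1 - r ^ 2) * Real.cos (2 * β) + (40) * Real.sin β * r ^ 8 * Real.sqrt (1 - r ^ 2) ^ 3 + (-16) * Real.sin β * r ^ 8 * Real.sqrt (1 - r ^ 2) ^ 3 * Real.cos (2 * β) + (784) * Real.sin β * r ^ 10 * Real.sqrt (1 - r ^ 2) + (152) * Real.sin β * r ^ 10 * Real.sqrt (1 - r ^ 2) * Real.cos (2 * β) + (-24) * Real.sin β * r ^ 10 * Real.sqrt (1 - r ^ 2) ^ 3 + (8) * Real.sin β * r ^ 10 * Real.sqrt (1 - r ^ 2) ^ 3 * Real.cos (2 * β) + (-216) * Real.sin β * r ^ 12 * Real.sqrt (1 - r ^ 2) + (-56) * Real.sin β * r ^ 12 * Real.sqrt (1 - r ^ 2) * Real.cos (2 * β) + (10) * Real.sin β * Real.cos β * r ^ 2 * Real.sqrt (1 - r ^ 2) + (1) * Real.sin β * Real.cos β * r ^ 2 * Real.sqrt (1 - r ^ 2) * Real.cos (2 * β) + (4) * Real.sin β * Real.cos β * r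 ^ 2 * Real.sqrt (1 - r ^ 2) ^ 3 + (1) * Real.sin β * Real.cos β * r ^ 2 * Real.sqrt (1 - r ^ 2) ^ 3 * Real.cos (2 * β) + (-234) * Real.sin β * Real.cos β * r ^ 4 * Real.sqrt (1 - r ^ 2) + (-5) * Real.sin β * Real.cos β * r ^ 4 * Real.sqrt (1 - r ^ 2) * Real.cos (2 * β) + (-2) * Real.sin β * Real.cos β * r ^ 4 * Real.sqrt (1 - r ^ 2) ^ 3 + (-6) * Real.sin β * Real.cos β * r ^ 4 * Real.sqrt (1 - r ^ 2) ^ 3 * Real.cos (2 * β) + (1084) * Real.sin β * Real.cos β * r ^ 6 * Real.sqrt (1 - r ^ 2) + (28) * Real.sin β * Real.cos β * r ^ 6 * Real.sqrt (1 - r ^ 2) * Real.cos (2 * β) + (-70) * Real.sin β * Real.cos β * r ^ 6 * Real.sqrt (1 - r ^ 2) ^ 3 + (14) * Real.sin β * Real.cos β * r ^ 6 * Real.sqrt (1 - r ^ 2) ^ 3 * Real.cos (2 * β) + (-2022) * Real.sin β * Real.cos β * r ^ 8 * Real.sqrt (1 - r ^ 2) + (-90) * Real.sin β * Real.cos β *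 r ^ 8 * Real.sqrt (1 - r ^ 2) * Real.cos (2 * β) + (152) * Real.sin β * Real.cos β * r ^ 8 * Real.sqrt (1 - r ^ 2) ^ 3 + (-16) * Real.sin β * Real.cos β * r ^ 8 * Real.sqrt (1 - r ^ 2) ^ 3 * Real.cos (2 * β) + (1696) * Real.sin β * Real.cos β * r ^ 10 * Real.sqrt (1 - r ^ 2) + (120) * Real.sin β * Real.cos β * r ^ 10 * Real.sqrt (1 - r ^ 2) * Real.cos (2 * β) + (-88) * Real.sin β * Real.cos β * r ^ 10 * Real.sqrt (1 - r ^ 2) ^ 3 + (8) * Real.sin β * Real.cos β * r ^ 10 * Real.sqrt (1 - r ^ 2) ^ 3 * Real.cos (2 * β) + (-536) * Real.sin β * Real.cos β * r ^ 12 * Real.sqrt (1 - r ^ 2) + (-56) * Real.sin β * Real.cos β * r ^ 12 * Real.sqrt (1 - r ^ 2) * Real.cos (2 * β) + (-14) * Real.sin β * Real.cos β ^ 2 * r ^ 2 * Real.sqrt (1 - r ^ 2) + (-2) * Real.sin β * Real.cos β ^ 2 * r ^ 2 * Real.sqrt (1 - r ^ 2) ^ 3 + (22) * Real.sin β * Real.cos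 β ^ 2 * r ^ 4 * Real.sqrt (1 - r ^ 2) + (24) * Real.sin β * Real.cos β ^ 2 * r ^ 4 * Real.sqrt (1 - r ^ 2) ^ 3 + (236) * Real.sin β * Real.cos β ^ 2 * r ^ 6 * Real.sqrt (1 - r ^ 2) + (-116) * Real.sin β * Real.cos β ^ 2 * r ^ 6 * Real.sqrt (1 - r ^ 2) ^ 3 + (-828) * Real.sin β * Real.cos β ^ 2 * r ^ 8 * Real.sqrt (1 - r ^ 2) + (200) * Real.sin β * Real.cos β ^ 2 * r ^ 8 * Real.sqrt (1 - r ^ 2) ^ 3 + (952) * Real.sin β * Real.cos β ^ 2 * r ^ 10 * Real.sqrt (1 - r ^ 2) + (-112) * Real.sin β * Real.cos β ^ 2 * r ^ 10 * Real.sqrt (1 - r ^ 2) ^ 3 + (-368) * Real.sin β * Real.cos β ^ 2 * r ^ 12 * Real.sqrt (1 - r ^ 2) + (-6) * Real.sin β * Real.cos β ^ 3 * r ^ 2 * Real.sqrt (1 - r ^ 2) + (-2) * Real.sin β * Real.cos β ^ 3 * r ^ 2 * Real.sqrt (1 - r ^ 2) ^ 3 + (38) * Real.sin β * Real.cos β ^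 3 * r ^ 4 * Real.sqrt (1 - r ^ 2) + (16) * Real.sin β * Real.cos β ^ 3 * r ^ 4 * Real.sqrt (1 - r ^ 2) ^ 3 + (-72) * Real.sin β * Real.cos β ^ 3 * r ^ 6 * Real.sqrt (1 - r ^ 2) + (-56) * Real.sin β * Real.cos β ^ 3 * r ^ 6 * Real.sqrt (1 - r ^ 2) ^ 3 + (16) * Real.sin β * Real.cos β ^ 3 * r ^ 8 * Real.sqrt (1 - r ^ 2) + (88) * Real.sin β * Real.cos β ^ 3 * r ^ 8 * Real.sqrt (1 - r ^ 2) ^ 3 + (72) * Real.sin β * Real.cos β ^ 3 * r ^ 10 * Real.sqrt (1 - r ^ 2) + (-48) * Real.sin β * Real.cos β ^ 3 * r ^ 10 * Real.sqrt (1 - r ^ 2) ^ 3 + (-48) * Real.sin β * Real.cos β ^ 3 * r ^ 12 * Real.sqrt (1 - r ^ 2) + (-8) * Real.sin β ^ 3 * r ^ 2 * Real.sqrt (1 - r ^ 2) ^ 3 + (8) * Real.sin β ^ 3 * r ^ 4 * Real.sqrt (1 - r ^ 2) + (40) * Real.sin β ^ 3 * r ^ 4 * Real.sqrt (1 - r ^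 2) ^ 3 + (-40) * Real.sin β ^ 3 * r ^ 6 * Real.sqrt (1 - r ^ 2) + (-64) * Real.sin β ^ 3 * r ^ 6 * Real.sqrt (1 - r ^ 2) ^ 3 + (64) * Real.sin β ^ 3 * r ^ 8 * Real.sqrt (1 - r ^ 2) + (32) * Real.sin β ^ 3 * r ^ 8 * Real.sqrt (1 - r ^ 2) ^ 3 + (-32) * Real.sin β ^ 3 * r ^ 10 * Real.sqrt (1 - r ^ 2) + (-4) * Real.sin β ^ 3 * Real.cos β * r ^ 2 * Real.sqrt (1 - r ^ 2) ^ 3 + (4) * Real.sin β ^ 3 * Real.cos β * r ^ 4 * Real.sqrt (1 - r ^ 2) + (24) * Real.sin β ^ 3 * Real.cos β * r ^ 4 * Real.sqrt (1 - r ^ 2) ^ 3 + (-24) * Real.sin β ^ 3 * Real.cos β * r ^ 6 * Real.sqrt (1 - r ^ 2) + (-48) * Real.sin β ^ 3 * Real.cos β * r ^ 6 * Real.sqrt (1 - r ^ 2) ^ 3 + (48) * Real.sin β ^ 3 * Real.cos β * r ^ 8 * Real.sqrt (1 - r ^ 2) + (32) * Real.sin β ^ 3 * Real.cos β * r ^ 8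 * Real.sqrt (1 - r ^ 2) ^ 3 + (-32) * Real.sin β ^ 3 * Real.cos β * r ^ 10 * Real.sqrt (1 - r ^ 2)) * hc2 + ((-20) * Real.sin β * r ^ 2 * Real.sqrt (1 - r ^ 2) + (156) * Real.sin β * r ^ 4 * Real.sqrt (1 - r ^ 2) + (-344) * Real.sin β * r ^ 6 * Real.sqrt (1 - r ^ 2) + (304) * Real.sin β * r ^ 8 * Real.sqrt (1 - r ^ 2) + (-96) * Real.sin β * r ^ 10 * Real.sqrt (1 - r ^ 2) + (-78) * Real.sin β * Real.cos β * r ^ 2 * Real.sqrt (1 - r ^ 2) + (604) * Real.sin β * Real.cos β * r ^ 4 * Real.sqrt (1 - r ^ 2) + (-1440) * Real.sin β * Real.cos β * r ^ 6 * Real.sqrt (1 - r ^ 2) + (1392) * Real.sin β * Real.cos β * r ^ 8 * Real.sqrt (1 - r ^ 2) + (-480) * Real.sin β * Real.cos β * r ^ 10 * Real.sqrt (1 - r ^ 2) + (-114) * Real.sin β * Real.cos β ^ 2 * r ^ 2 * Real.sqrt (1 - r ^ 2) + (908) * Real.sin β * Real.cos β ^ 2 * r ^ 4 * Real.sqrt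 (1 - r ^ 2) + (-2368) * Real.sin β * Real.cos β ^ 2 * r ^ 6 * Real.sqrt (1 - r ^ 2) + (2528) * Real.sin β * Real.cos β ^ 2 * r ^ 8 * Real.sqrt (1 - r ^ 2) + (-960) * Real.sin β * Real.cos β ^ 2 * r ^ 10 * Real.sqrt (1 - r ^ 2) + (-80) * Real.sin β * Real.cos β ^ 3 * r ^ 2 * Real.sqrt (1 - r ^ 2) + (660) * Real.sin β * Real.cos β ^ 3 * r ^ 4 * Real.sqrt (1 - r ^ 2) + (-1904) * Real.sin β * Real.cos β ^ 3 * r ^ 6 * Real.sqrt (1 - r ^ 2) + (2272) * Real.sin β * Real.cos β ^ 3 * r ^ 8 * Real.sqrt (1 - r ^ 2) + (-960) * Real.sin β * Real.cos β ^ 3 * r ^ 10 * Real.sqrt (1 - r ^ 2) + (-28) * Real.sin β * Real.cos β ^ 4 * r ^ 2 * Real.sqrt (1 - r ^ 2) + (232) * Real.sin β * Real.cos β ^ 4 * r ^ 4 * Real.sqrt (1 - r ^ 2) + (-744) * Real.sin β * Real.cos β ^ 4 * r ^ 6 * Real.sqrt (1 - r ^ 2) + (1008) * Real.sin β * Real.cos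 β ^ 4 * r ^ 8 * Real.sqrt (1 - r ^ 2) + (-480) * Real.sin β * Real.cos β ^ 4 * r ^ 10 * Real.sqrt (1 - r ^ 2) + (-4) * Real.sin β * Real.cos β ^ 5 * r ^ 2 * Real.sqrt (1 - r ^ 2) + (32) * Real.sin β * Real.cos β ^ 5 * r ^ 4 * Real.sqrt (1 - r ^ 2) + (-112) * Real.sin β * Real.cos β ^ 5 * r ^ 6 * Real.sqrt (1 - r ^ 2) + (176) * Real.sin β * Real.cos β ^ 5 * r ^ 8 * Real.sqrt (1 - r ^ 2) + (-96) * Real.sin β * Real.cos β ^ 5 * r ^ 10 * Real.sqrt (1 - r ^ 2) + (-112) * Real.sin β ^ 3 * r ^ 2 * Real.sqrt (1 - r ^ 2) + (288) * Real.sin β ^ 3 * r ^ 4 * Real.sqrt (1 - r ^ 2) + (-240) * Real.sin β ^ 3 * r ^ 6 * Real.sqrt (1 - r ^ 2) + (64) * Real.sin β ^ 3 * r ^ 8 * Real.sqrt (1 - r ^ 2) + (-192) * Real.sin β ^ 3 * Real.cos β * r ^ 2 * Real.sqrt (1 - r ^ 2) + (624) * Real.sin β ^ 3 * Real.cos β *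 r ^ 4 * Real.sqrt (1 - r ^ 2) + (-624) * Real.sin β ^ 3 * Real.cos β * r ^ 6 * Real.sqrt (1 - r ^ 2) + (192) * Real.sin β ^ 3 * Real.cos β * r ^ 8 * Real.sqrt (1 - r ^ 2) + (-108) * Real.sin β ^ 3 * Real.cos β ^ 2 * r ^ 2 * Real.sqrt (1 - r ^ 2) + (432) * Real.sin β ^ 3 * Real.cos β ^ 2 * r ^ 4 * Real.sqrt (1 - r ^ 2) + (-528) * Real.sin β ^ 3 * Real.cos β ^ 2 * r ^ 6 * Real.sqrt (1 - r ^ 2) + (192) * Real.sin β ^ 3 * Real.cos β ^ 2 * r ^ 8 * Real.sqrt (1 - r ^ 2) + (-20) * Real.sin β ^ 3 * Real.cos β ^ 3 * r ^ 2 * Real.sqrt (1 - r ^ 2) + (96) * Real.sin β ^ 3 * Real.cos β ^ 3 * r ^ 4 * Real.sqrt (1 - r ^ 2) + (-144) * Real.sin β ^ 3 * Real.cos β ^ 3 * r ^ 6 * Real.sqrt (1 - r ^ 2) + (64) * Real.sin β ^ 3 * Real.cos β ^ 3 * r ^ 8 * Real.sqrt (1 - r ^ 2)) * hq + ((-128)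 * Real.sin β * r ^ 2 * Real.sqrt (1 - r ^ 2) + (512) * Real.sin β * r ^ 4 * Real.sqrt (1 - r ^ 2) + (-768) * Real.sin β * r ^ 6 * Real.sqrt (1 - r ^ 2) + (512) * Real.sin β * r ^ 8 * Real.sqrt (1 - r ^ 2) + (-128) * Real.sin β * r ^ 10 * Real.sqrt (1 - r ^ 2) + (-192) * Real.sin β * Real.cos β * r ^ 2 * Real.sqrt (1 - r ^ 2) + (960) * Real.sin β * Real.cos β * r ^ 4 * Real.sqrt (1 - r ^ 2) + (-1728) * Real.sin β * Real.cos β * r ^ 6 * Real.sqrt (1 - r ^ 2) + (1344) * Real.sin β * Real.cos β * r ^ 8 * Real.sqrt (1 - r ^ 2) + (-384) * Real.sin β * Real.cos β * r ^ 10 * Real.sqrt (1 - r ^ 2) + (-96) * Real.sin β * Real.cos β ^ 2 * r ^ 2 * Real.sqrt (1 - r ^ 2) + (576) * Real.sin β * Real.cos β ^ 2 * r ^ 4 * Real.sqrt (1 - r ^ 2) + (-1248) * Real.sin β * Real.cos β ^ 2 * r ^ 6 * Real.sqrt (1 - r ^ 2) + (1152) * Real.sin β * Real.cos β ^ 2 *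 r ^ 8 * Real.sqrt (1 - r ^ 2) + (-384) * Real.sin β * Real.cos β ^ 2 * r ^ 10 * Real.sqrt (1 - r ^ 2) + (-16) * Real.sin β * Real.cos β ^ 3 * r ^ 2 * Real.sqrt (1 - r ^ 2) + (112) * Real.sin β * Real.cos β ^ 3 * r ^ 4 * Real.sqrt (1 - r ^ 2) + (-288) * Real.sin β * Real.cos β ^ 3 * r ^ 6 * Real.sqrt (1 - r ^ 2) + (320) * Real.sin β * Real.cos β ^ 3 * r ^ 8 * Real.sqrt (1 - r ^ 2) + (-128) * Real.sin β * Real.cos β ^ 3 * r ^ 10 * Real.sqrt (1 - r ^ 2)) * hsB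
  · rw [RL_eq r hq, RR_eq r hq, RL_eq r hq, RR_eq r hq]
    simp only [add_comm Real.pi β, Real.sin_add_pi, Real.cos_add_pi, Real.sin_pi, Real.cos_pi]
    simp [Matrix.mul_apply, Fin.sum_univ_three]
    linear_combination ((-2) * Real.sin β * r ^ 2 * Real.sqrt (1 - r ^ 2) + (-2) * Real.sin β * Real.cos β * r ^ 2 * Real.sqrt (1 - r ^ 2)) * hq
end
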